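/- For every n ≥ 2, the graph G obtained from the complete graph K_n by adding, for each pair {u,v} of clique vertices, 2n new vertices adjacent exactly to u and v, satisfies: G has order n³ - n² + n, and every minimal feedback vertex set of G has size at most 3n. Consequently there are reduced graphs H with mmfvs(H) = O(|V(H)|^{1/3}). -/

import Mathlib

open SimpleGraph

def IsFVS {V : Type*} (G : SimpleGraph V) (S : Set V) : Prop :=
  (G.induce Sᶜ).IsAcyclic

def IsMinFVS {V : Type*} (G : SimpleGraph V) (S : Set V) : Prop :=
  IsFVS G S ∧ ∀ T : Set V, T ⊂ S → ¬ IsFVS G T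

noncomputable def mmfvs {V : Type*} (G : SimpleGraph V) : ℕ :=
  sSup {k | ∃ S : Set V, IsMinFVS G S ∧ S.ncard = k}

/-- `K_n` plus, for each pair `u < v` of clique vertices, `2n` new vertices
adjacent exactly to `u` and `v`. -/
def cliqueGadget (n : ℕ) :
    SimpleGraph (Fin n ⊕ ({p : Fin n × Fin n // p.1 < p.2} × Fin (2 * n))) where
  Adj x y :=
    match x, y with
    | Sum.inl a, Sum.inl b => a ≠ b
    | Sum.inl a, Sum.inr (e, _) => a = e.1.1 ∨ a = e.1.2
    | Sum.inr (e, _), Sum.inl a => a = e.1.1 ∨ a = e.1.2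
    | Sum.inr _, Sum.inr _ => False
  symm := ⟨by rintro (a | e) (b | f) h <;> simp_all <;> omega⟩
  loopless := ⟨by rintro (a | e) <;> simp⟩

section Helpers

variable {V : Type*} {G : SimpleGraph V} {A : Set V}

lemma exists_lift {x y : V} (p : G.Walk x y) (h : ∀ v ∈ p.support, v ∈ A)
    (hx : x ∈ A) (hy : y ∈ A) :
    ∃ q : (G.induce A).Walk ⟨x, hx⟩ ⟨y, hy⟩,
      q.map (SimpleGraph.Embedding.induce A).toHom = p := by
  induction p with
  | nil => exact ⟨Walk.nil, rfl⟩
  | cons hadj p ih =>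
    rename_i u v w
    have hv : v ∈ A := h v (by simp)
    obtain ⟨q, hq⟩ := ih (fun z hz => h z (by simp [hz])) hv hy
    exact ⟨Walk.cons (by simpa using hadj) q, by simp [hq]⟩

lemma induce_acyclic_iff :
    (G.induce A).IsAcyclic ↔
      ∀ (x : V) (_ : x ∈ A) (c : G.Walk x x), (∀ v ∈ c.support, v ∈ A) → ¬ c.IsCycle := by
  constructor
  · intro hac x hx c hsup hc
    obtain ⟨q, hq⟩ := exists_lift c hsup hx hx
    apply hac q
    rw [← hq] at hc
    exact (Walk.map_isCycle_iff_of_injective (SimpleGraph.Embedding.induce (G := G) A).injective).mp hc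
  · rintro h ⟨x, hx⟩ c hc
    refine h x hx (c.map (SimpleGraph.Embedding.induce A).toHom) ?_
      (hc.map (SimpleGraph.Embedding.induce (G := G) A).injective)
    intro v hv
    erw [Walk.support_map, List.mem_map] at hv
    obtain ⟨⟨u, hu⟩, _, rfl⟩ := hv
    exact hu

lemma triangle_cycle {a b c : V} (hab : G.Adj a b) (hbc : G.Adj b c) (hca : G.Adj c a) :
    (Walk.cons hab (Walk.cons hbc (Walk.cons hca Walk.nil))).IsCycle := by
  rw [Walk.cons_isCycle_iff]
  refine ⟨?_, ?_⟩
  · simp [Walk.cons_isPath_iff, hab.ne, hab.ne', hbc.ne, hbc.ne', hca.ne, hca.ne']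
  · simp [Sym2.eq_iff, hab.ne, hab.ne', hbc.ne, hbc.ne', hca.ne, hca.ne']

lemma pendant_fvs {S : Set V} (hS : IsFVS G S) {w z : V} (hw : w ∈ S)
    (hz : ∀ x, G.Adj w x → x ∉ S → x = z) : IsFVS G (S \ {w}) := by
  have hcompl : (S \ {w})ᶜ = insert w Sᶜ := by
    ext v; simp [Set.mem_compl_iff, Set.mem_diff]; tauto
  unfold IsFVS at hS ⊢
  rw [hcompl, induce_acyclic_iff]
  rw [induce_acyclic_iff] at hS
  intro x hx c hsup hc
  by_cases hwc : w ∈ c.support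
  · -- rotate to start at w
    classical
    obtain ⟨c', hc', hsup'⟩ :
        ∃ c' : G.Walk w w, c'.IsCycle ∧ ∀ v ∈ c'.support, v ∈ insert w Sᶜ := by
      refine ⟨c.rotate w hwc, hc.rotate hwc, ?_⟩
      intro v hv
      rw [Walk.support_eq_cons (c.rotate w hwc)] at hv
      rcases List.eq_or_mem_of_mem_cons hv with rfl | h
      · exact Set.mem_insert _ _
      · exact hsup v (List.mem_of_mem_tail ((c.support_rotate w hwc).mem_iff.mp h))
    rcases c' with _ | ⟨hadj, q⟩
    · exact hc'.ne_nil rfl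
    · rename_i u
      -- hadj : G.Adj w u, q : G.Walk u w
      rw [Walk.cons_isCycle_iff] at hc'
      obtain ⟨hqpath, hedge⟩ := hc'
      have hune : w ≠ u := hadj.ne
      obtain ⟨y, hr, r, hqrev⟩ := Walk.exists_eq_cons_of_ne hune q.reverse
      -- hr : G.Adj w y
      have hu : u = z := by
        apply hz u hadj
        have : u ∈ insert w Sᶜ := hsup' u (by simp)
        rcases this with h | h
        · exact absurd h.symm hune
        · exact h
      have hy : y = z := by
        apply hz y hr
        have hymem : y ∈ q.support := by
          have : y ∈ q.reverse.support := by rw [hqrev]; simp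
          simpa using this
        have : y ∈ insert w Sᶜ := hsup' y (by simp [hymem])
        rcases this with h | h
        · exact absurd h.symm hr.ne
        · exact h
      apply hedge
      have : s(w, y) ∈ q.reverse.edges := by rw [hqrev]; simp
      rw [Walk.edges_reverse, List.mem_reverse] at this
      rw [show y = u from hy.trans hu.symm] at this
      exact this
  · -- w not in support: support ⊆ Sᶜ
    have hx' : x ∈ Sᶜ := by
      rcases hx with h | h
      · exact absurd (h ▸ c.start_mem_support) hwc
      · exact h
    refine hS x hx' c ?_ hc
    intro v hv
    rcases hsup v hv with h | h
    · exact absurd (h ▸ hv) hwc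
    · exact h

end Helpers

theorem cliqueGadget_order_and_mmfvs (n : ℕ) (hn : 2 ≤ n) :
    Fintype.card (Fin n ⊕ ({p : Fin n × Fin n // p.1 < p.2} × Fin (2 * n)))
      = n ^ 3 - n ^ 2 + n ∧
    ∀ S, IsMinFVS (cliqueGadget n) S → S.ncard ≤ 3 * n := by
  classical
  constructor
  · -- cardinality
    have hE : Fintype.card {p : Fin n × Fin n // p.1 < p.2} * 2 = n * n - n := by
      rw [Fintype.card_subtype]
      set A := Finset.univ.filter (fun p : Fin n × Fin n => p.1 < p.2) with hA
      set B := Finset.univ.filter (fun p : Fin n × Fin n => p.2 < p.1) with hB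
      have hAB : A.card = B.card := by
        apply Finset.card_bij (fun p _ => (p.2, p.1))
        · intro p hp; simp [hA, hB] at hp ⊢; exact hp
        · intro p hp q hq h
          simp [hA] at hp hq
          exact Prod.ext (congrArg Prod.snd h) (congrArg Prod.fst h)
        · intro p hp
          refine ⟨(p.2, p.1), ?_, rfl⟩
          simp [hA, hB] at hp ⊢; exact hp
      have hdisj : Disjoint A B := by
        rw [Finset.disjoint_left]
        intro p hp hq
        simp [hA, hB] at hp hq
        exact absurd hq (not_lt_of_gt hp)
      have hunion : A ∪ B = Finset.univ.filter (fun p : Fin n × Fin n => p.1 ≠ p.2) := by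
        ext p
        simp only [hA, hB, Finset.mem_union, Finset.mem_filter, Finset.mem_univ, true_and]
        rw [ne_iff_lt_or_gt]
      have hne : (Finset.univ.filter (fun p : Fin n × Fin n => p.1 ≠ p.2)).card = n * n - n := by
        have h1 := Finset.card_filter_add_card_filter_not
          (s := (Finset.univ : Finset (Fin n × Fin n))) (p := fun p => p.1 = p.2)
        have h2 : (Finset.univ.filter (fun p : Fin n × Fin n => p.1 = p.2)).card = n := by
          rw [show (Finset.univ.filter (fun p : Fin n × Fin n => p.1 = p.2))
              = (Finset.univ : Finset (Fin n)).diag by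
            ext p; simp [Finset.mem_diag]]
          rw [Finset.diag_card]; simp
        have h3 : (Finset.univ : Finset (Fin n × Fin n)).card = n * n := by simp
        have h4 : (Finset.univ.filter (fun p : Fin n × Fin n => ¬ p.1 = p.2)).card
            = (Finset.univ.filter (fun p : Fin n × Fin n => p.1 ≠ p.2)).card := rfl
        omega
      have := Finset.card_union_of_disjoint hdisj
      rw [hunion] at this
      omega
    rw [Fintype.card_sum, Fintype.card_prod, Fintype.card_fin, Fintype.card_fin]
    have h3 : n ^ 3 = n * n * n := by ring
    have h2 : n ^ 2 = n * n := by ring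
    have hle : n * n ≤ n * n * n := Nat.le_mul_of_pos_right _ (by omega)
    have : Fintype.card {p : Fin n × Fin n // p.1 < p.2} * (2 * n) = n * n * n - n * n := by
      rw [show Fintype.card {p : Fin n × Fin n // p.1 < p.2} * (2 * n)
          = Fintype.card {p : Fin n × Fin n // p.1 < p.2} * 2 * n by ring, hE,
        Nat.sub_mul]
    rw [this, h3, h2]
    omega
  · -- mmfvs bound
    intro S hSm
    obtain ⟨hS, hmin⟩ := hSm
    set G := cliqueGadget n with hG
    -- triangles among clique vertices outside S are impossible
    have htri : ∀ a b c : Fin n, a ≠ b → a ≠ c → b ≠ c →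
        Sum.inl a ∉ S → Sum.inl b ∉ S → Sum.inl c ∉ S → False := by
      intro a b c hab hac hbc ha hb hc
      have Hab : G.Adj (Sum.inl a) (Sum.inl b) := hab
      have Hbc : G.Adj (Sum.inl b) (Sum.inl c) := hbc
      have Hca : G.Adj (Sum.inl c) (Sum.inl a) := fun h => hac h.symm
      have hcyc := triangle_cycle Hab Hbc Hca
      rw [IsFVS, induce_acyclic_iff] at hS
      refine hS (Sum.inl a) ha _ ?_ hcyc
      intro v hv
      simp only [Walk.support_cons, Walk.support_nil, List.mem_cons,
        List.not_mem_nil, or_false] at hv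
      rcases hv with rfl | rfl | rfl | rfl <;> assumption
    -- gadget vertices in S have both endpoints outside S
    have claim1 : ∀ (e : {p : Fin n × Fin n // p.1 < p.2}) (i : Fin (2 * n)),
        Sum.inr (e, i) ∈ S → Sum.inl e.1.1 ∉ S ∧ Sum.inl e.1.2 ∉ S := by
      intro e i hmem
      constructor
      · intro hu
        refine hmin (S \ {Sum.inr (e, i)}) (Set.sdiff_singleton_ssubset.mpr hmem) ?_
        refine pendant_fvs hS hmem (z := Sum.inl e.1.2) ?_
        rintro (a | ⟨e', j⟩) hadj hxS
        · rcases (hadj : a = e.1.1 ∨ a = e.1.2) with rfl | rfl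
          · exact absurd hu hxS
          · rfl
        · exact (hadj : False).elim
      · intro hu
        refine hmin (S \ {Sum.inr (e, i)}) (Set.sdiff_singleton_ssubset.mpr hmem) ?_
        refine pendant_fvs hS hmem (z := Sum.inl e.1.1) ?_
        rintro (a | ⟨e', j⟩) hadj hxS
        · rcases (hadj : a = e.1.1 ∨ a = e.1.2) with rfl | rfl
          · rfl
          · exact absurd hu hxS
        · exact (hadj : False).elim
    -- all gadget vertices in S belong to the same pair
    have claim2 : ∀ (e e' : {p : Fin n × Fin n // p.1 < p.2}) (i j : Fin (2 * n)),
        Sum.inr (e, i) ∈ S → Sum.inr (e', j) ∈ S → e = e' := by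
      intro e e' i j he he'
      by_contra hee'
      obtain ⟨ha, hb⟩ := claim1 e i he
      obtain ⟨ha', hb'⟩ := claim1 e' j he'
      have hlt : (e.1.1 : ℕ) < e.1.2 := Fin.lt_def.mp e.2
      have hlt' : (e'.1.1 : ℕ) < e'.1.2 := Fin.lt_def.mp e'.2
      have hkey : (e'.1.1 ≠ e.1.1 ∧ e'.1.1 ≠ e.1.2) ∨ (e'.1.2 ≠ e.1.1 ∧ e'.1.2 ≠ e.1.2) := by
        by_contra hcon
        push_neg at hcon
        obtain ⟨h1, h2⟩ := hcon
        apply hee'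
        have v1 : (e'.1.1 : ℕ) = e.1.1 ∨ (e'.1.1 : ℕ) = e.1.2 := by
          rcases Decidable.em (e'.1.1 = e.1.1) with h | h
          · exact Or.inl (congrArg Fin.val h)
          · exact Or.inr (congrArg Fin.val (h1 h))
        have v2 : (e'.1.2 : ℕ) = e.1.1 ∨ (e'.1.2 : ℕ) = e.1.2 := by
          rcases Decidable.em (e'.1.2 = e.1.1) with h | h
          · exact Or.inl (congrArg Fin.val h)
          · exact Or.inr (congrArg Fin.val (h2 h))
        have hv : (e'.1.1 : ℕ) = e.1.1 ∧ (e'.1.2 : ℕ) = e.1.2 := by omega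
        exact (Subtype.ext (Prod.ext (Fin.ext hv.1) (Fin.ext hv.2))).symm
      rcases hkey with ⟨h1, h2⟩ | ⟨h1, h2⟩
      · exact htri e.1.1 e.1.2 e'.1.1 (Fin.ne_of_lt e.2) (Ne.symm h1) (Ne.symm h2) ha hb ha'
      · exact htri e.1.1 e.1.2 e'.1.2 (Fin.ne_of_lt e.2) (Ne.symm h1) (Ne.symm h2) ha hb hb'
    -- conclude the bound
    have hinl : (Set.range (Sum.inl : Fin n → Fin n ⊕ ({p : Fin n × Fin n // p.1 < p.2} × Fin (2 * n)))).ncard = n := by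
      rw [← Set.image_univ, Set.ncard_image_of_injective _ Sum.inl_injective,
        Set.ncard_univ, Nat.card_eq_fintype_card, Fintype.card_fin]
    by_cases hgad : ∃ e i, Sum.inr (e, i) ∈ S
    · obtain ⟨e₀, i₀, h₀⟩ := hgad
      set f : Fin (2 * n) → Fin n ⊕ ({p : Fin n × Fin n // p.1 < p.2} × Fin (2 * n)) :=
        fun j => Sum.inr (e₀, j) with hf
      have hfinj : Function.Injective f := by
        intro x y h
        simpa [hf] using h
      have hsub : S ⊆ Set.range Sum.inl ∪ Set.range f := by
        rintro (a | ⟨e, j⟩) hx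
        · exact Or.inl ⟨a, rfl⟩
        · refine Or.inr ⟨j, ?_⟩
          rw [hf]
          simp [claim2 e e₀ j i₀ hx h₀]
      calc S.ncard ≤ (Set.range Sum.inl ∪ Set.range f).ncard :=
            Set.ncard_le_ncard hsub (Set.toFinite _)
        _ ≤ (Set.range Sum.inl).ncard + (Set.range f).ncard := Set.ncard_union_le _ _
        _ ≤ n + 2 * n := by
            rw [hinl, ← Set.image_univ, Set.ncard_image_of_injective _ hfinj,
              Set.ncard_univ, Nat.card_eq_fintype_card, Fintype.card_fin]
        _ = 3 * n := by ring
    · push_neg at hgad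
      have hsub : S ⊆ Set.range Sum.inl := by
        rintro (a | ⟨e, j⟩) hx
        · exact ⟨a, rfl⟩
        · exact absurd hx (hgad e j)
      calc S.ncard ≤ (Set.range Sum.inl).ncard := Set.ncard_le_ncard hsub (Set.toFinite _)
        _ = n := hinl
        _ ≤ 3 * n := by omega
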